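/- For every j ≥ 1, the composition f_j∘Z satisfies, in ℝ[[v]]: αβ·(1−v³)·(f_j∘Z) = v^j·(vα+β)·(α + vβ + βv²). -/

import Mathlib

open PowerSeries Filter

noncomputable section

/-- Composition `h ∘ Z` of formal power series; this is the usual composition whenever
`Z` has zero constant term (then for each `n` only finitely many terms contribute). -/
def psComp (h Z : PowerSeries ℝ) : PowerSeries ℝ :=
  PowerSeries.mk fun n => ∑' k : ℕ, (PowerSeries.coeff k h) * (PowerSeries.coeff n (Z ^ k))

/-- The substitution series `Z = v · ((α+βv)(β+αv))⁻¹ ∈ ℝ[[v]]`; the inverse exists since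
the constant term `αβ` is nonzero, and `Z` has zero constant term. -/
def Zsub (α β : ℝ) : PowerSeries ℝ :=
  PowerSeries.X * (((PowerSeries.C α) + (PowerSeries.C β) * PowerSeries.X) *
    ((PowerSeries.C β) + (PowerSeries.C α) * PowerSeries.X))⁻¹

open Finset
variable {Z : PowerSeries ℝ}

lemma zpow_coeff_zero (hZ : constantCoeff Z = 0) {n k : ℕ} (h : n < k) : coeff n (Z ^ k) = 0 := by
  obtain ⟨t, ht⟩ := X_dvd_iff.mpr hZ
  rw [ht, mul_pow, coeff_X_pow_mul']
  exact if_neg (by omega)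

lemma coeff_psComp (hZ : constantCoeff Z = 0) (h : PowerSeries ℝ) (n : ℕ) :
    coeff n (psComp h Z) = ∑ k ∈ range (n + 1), coeff k h * coeff n (Z ^ k) := by
  rw [psComp, coeff_mk]
  exact tsum_eq_sum fun k hk => by
    rw [zpow_coeff_zero hZ (by simpa using hk), mul_zero]

lemma coeff_psComp_eval (hZ : constantCoeff Z = 0) (h : PowerSeries ℝ) (n : ℕ) :
    coeff n (psComp h Z) = coeff n (Polynomial.eval₂ C Z (trunc (n + 1) h)) := by
  rw [eval₂_trunc_eq_sum_range, map_sum, coeff_psComp hZ]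
  refine Finset.sum_congr rfl fun k _ => ?_
  rw [coeff_C_mul]

lemma eval₂_coeff_congr (hZ : constantCoeff Z = 0) {P Q : Polynomial ℝ} {n : ℕ} (hag : ∀ k ≤ n, P.coeff k = Q.coeff k) :
    coeff n (Polynomial.eval₂ C Z P) = coeff n (Polynomial.eval₂ C Z Q) := by
  suffices h : ∀ R : Polynomial ℝ, (∀ k ≤ n, R.coeff k = 0) →
      coeff n (Polynomial.eval₂ C Z R) = 0 by
    have h2 := h (P - Q) (fun k hk => by simp [hag k hk])
    rw [Polynomial.eval₂_sub, map_sub, sub_eq_zero] at h2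
    exact h2
  intro R hR
  rw [Polynomial.eval₂_eq_sum, Polynomial.sum_def, map_sum]
  refine Finset.sum_eq_zero fun k _ => ?_
  by_cases hkn : k ≤ n
  · rw [hR k hkn]; simp
  · rw [coeff_C_mul, zpow_coeff_zero hZ (by omega), mul_zero]

lemma coeff_psComp_of_le (hZ : constantCoeff Z = 0) {h : PowerSeries ℝ} {k n : ℕ} (hk : k ≤ n) :
    coeff k (psComp h Z) = coeff k (Polynomial.eval₂ C Z (trunc (n + 1) h)) := by
  rw [coeff_psComp_eval hZ]
  refine eval₂_coeff_congr hZ fun j hj => ?_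
  rw [coeff_trunc, coeff_trunc, if_pos (by omega), if_pos (by omega)]

lemma psComp_mul (hZ : constantCoeff Z = 0) (h₁ h₂ : PowerSeries ℝ) :
    psComp (h₁ * h₂) Z = psComp h₁ Z * psComp h₂ Z := by
  ext n
  rw [coeff_psComp_eval hZ]
  have e1 : coeff n (Polynomial.eval₂ C Z (trunc (n + 1) (h₁ * h₂)))
      = coeff n (Polynomial.eval₂ C Z (trunc (n + 1) h₁ * trunc (n + 1) h₂)) := by
    refine eval₂_coeff_congr hZ fun k hk => ?_
    rw [coeff_trunc, if_pos (by omega), Polynomial.coeff_mul, PowerSeries.coeff_mul]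
    refine Finset.sum_congr rfl fun p hp => ?_
    rw [Finset.HasAntidiagonal.mem_antidiagonal] at hp
    rw [coeff_trunc, coeff_trunc, if_pos (by omega), if_pos (by omega)]
  rw [e1, Polynomial.eval₂_mul, PowerSeries.coeff_mul, PowerSeries.coeff_mul]
  refine Finset.sum_congr rfl fun p hp => ?_
  rw [Finset.HasAntidiagonal.mem_antidiagonal] at hp
  rw [coeff_psComp_of_le hZ (k := p.1) (n := n) (by omega),
      coeff_psComp_of_le hZ (k := p.2) (n := n) (by omega)]

lemma psComp_add (hZ : constantCoeff Z = 0) (h₁ h₂ : PowerSeries ℝ) :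
    psComp (h₁ + h₂) Z = psComp h₁ Z + psComp h₂ Z := by
  ext n
  simp [coeff_psComp hZ, map_add, add_mul, Finset.sum_add_distrib]

lemma psComp_C (hZ : constantCoeff Z = 0) (a : ℝ) : psComp (C a) Z = C a := by
  ext n
  rw [coeff_psComp hZ, Finset.sum_eq_single 0]
  · simp [coeff_C, coeff_one]
  · intro k _ hk; simp [coeff_C, hk]
  · intro h; simp at h

lemma psComp_one (hZ : constantCoeff Z = 0) : psComp 1 Z = 1 := by
  have := psComp_C hZ 1; rwa [map_one] at this

lemma psComp_X (hZ : constantCoeff Z = 0) : psComp X Z = Z := by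
  ext n
  rw [coeff_psComp hZ]
  cases n with
  | zero =>
    simp only [coeff_zero_eq_constantCoeff] at hZ ⊢
    simp [hZ]
  | succ n =>
    rw [Finset.sum_eq_single 1]
    · simp
    · intro k _ hk; simp [coeff_X, hk]
    · intro h; simp at h

lemma vanish_of_shift (D : ℕ → PowerSeries ℝ) (hrec : ∀ N, D N = X * D (N + 1)) :
    ∀ N, D N = 0 := by
  have tele : ∀ k N, D N = X ^ k * D (N + k) := by
    intro k
    induction k with
    | zero => simp
    | succ k ih =>
      intro N
      rw [ih N, hrec (N + k), pow_succ]
      ring_nf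
  intro N
  ext n
  rw [tele (n + 1) N, coeff_X_pow_mul', if_neg (by omega), map_zero]

/-- For every `j ≥ 1`: `αβ(1-v³)·(f_j∘Z) = v^j(vα+β)(α+vβ+βv²)`. -/
theorem twoStep_fj_substituted
    (α β : ℝ) (hα0 : 0 < α) (hα1 : α < 1) (hβ : β = 1 - α)
    (f g : ℕ → PowerSeries ℝ) (fQ : PowerSeries ℝ)
    (hf : ∀ N : ℕ, f (N + 2) =
      C (α * β) * X * f (N + 1) + C (α * β) * X * f (N + 3)
        + C (α ^ 2 + β ^ 2) * X * f (N + 2))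
    (hf1 : f 1 = C (α * β) * X * f 0 + C (α * β) * X * f 2
        + C (α ^ 2 + β ^ 2) * X * f 1 + C (β ^ 2) * X * fQ)
    (hf0 : f 0 = 1 + C (α * β) * X * f 1 + C (α ^ 2 + β ^ 2) * X * f 0
        + C (α * β) * X * fQ)
    (hfQ : fQ = C (α * β) * X * g 0 + C (α ^ 2) * X * fQ)
    (hg : ∀ N : ℕ, g (N + 1) = C (α * β) * X * g N + C (α * β) * X * g (N + 2)
        + C (α ^ 2 + β ^ 2) * X * g (N + 1))
    (hg0 : g 0 = C (α * β) * X * f 0 + C (α * β) * X * g 1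
        + C (α * β) * X * fQ + C (α ^ 2 + β ^ 2) * X * g 0)
    (hsupp : ∀ m N : ℕ, m < N → coeff m (f N) = 0 ∧ coeff m (g N) = 0) :
    ∀ j : ℕ, 1 ≤ j → C (α * β) * (1 - X ^ 3) * psComp (f j) (Zsub α β) =
      X ^ j * (X * C α + C β) * (C α + X * C β + C β * X ^ 2) := by
  have hαne : α ≠ 0 := ne_of_gt hα0
  have hβne : β ≠ 0 := by rw [hβ]; exact ne_of_gt (by linarith)
  have hCα : C α ≠ 0 := fun h => hαne (by simpa using congrArg (constantCoeff) h)
  have hCβ : C β ≠ 0 := fun h => hβne (by simpa using congrArg (constantCoeff) h)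
  have hCAB : C α * C β ≠ 0 := mul_ne_zero hCα hCβ
  have hCabX : C α + C β * X ≠ 0 := fun h => hαne (by simpa using congrArg (constantCoeff) h)
  have hW : constantCoeff (Zsub α β) = 0 := by simp [Zsub]
  have hQc : constantCoeff ((C α + C β * X) * (C β + C α * X)) ≠ 0 := by
    simp [mul_ne_zero hαne hβne]
  have hWQ : Zsub α β * ((C α + C β * X) * (C β + C α * X)) = X := by
    rw [Zsub, mul_assoc, PowerSeries.inv_mul_cancel _ hQc, mul_one]
  -- transformed hypotheses
  have Hf : ∀ N, psComp (f (N + 2)) (Zsub α β) =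
      C α * C β * Zsub α β * psComp (f (N + 1)) (Zsub α β)
      + C α * C β * Zsub α β * psComp (f (N + 3)) (Zsub α β)
      + (C α * C α + C β * C β) * Zsub α β * psComp (f (N + 2)) (Zsub α β) := by
    intro N
    have h := congrArg (fun t => psComp t (Zsub α β)) (hf N)
    simp only [psComp_add hW, psComp_mul hW, psComp_C hW, psComp_X hW, psComp_one hW] at h
    simp only [map_mul, map_add, map_pow] at h
    linear_combination h
  have Hg : ∀ N, psComp (g (N + 1)) (Zsub α β) =
      C α * C β * Zsub α β * psComp (g N) (Zsub α β)
      + C α * C β * Zsub α β * psComp (g (N + 2)) (Zsub α β)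
      + (C α * C α + C β * C β) * Zsub α β * psComp (g (N + 1)) (Zsub α β) := by
    intro N
    have h := congrArg (fun t => psComp t (Zsub α β)) (hg N)
    simp only [psComp_add hW, psComp_mul hW, psComp_C hW, psComp_X hW, psComp_one hW] at h
    simp only [map_mul, map_add, map_pow] at h
    linear_combination h
  have H1 : psComp (f 1) (Zsub α β) =
      C α * C β * Zsub α β * psComp (f 0) (Zsub α β)
      + C α * C β * Zsub α β * psComp (f 2) (Zsub α β)
      + (C α * C α + C β * C β) * Zsub α β * psComp (f 1) (Zsub α β)
      + C β * C β * Zsub α β * psComp fQ (Zsub α β) := by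
    have h := congrArg (fun t => psComp t (Zsub α β)) hf1
    simp only [psComp_add hW, psComp_mul hW, psComp_C hW, psComp_X hW, psComp_one hW] at h
    simp only [map_mul, map_add, map_pow] at h
    linear_combination h
  have H0 : psComp (f 0) (Zsub α β) = 1
      + C α * C β * Zsub α β * psComp (f 1) (Zsub α β)
      + (C α * C α + C β * C β) * Zsub α β * psComp (f 0) (Zsub α β)
      + C α * C β * Zsub α β * psComp fQ (Zsub α β) := by
    have h := congrArg (fun t => psComp t (Zsub α β)) hf0
    simp only [psComp_add hW, psComp_mul hW, psComp_C hW, psComp_X hW, psComp_one hW] at h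
    simp only [map_mul, map_add, map_pow] at h
    linear_combination h
  have HQ : psComp fQ (Zsub α β) =
      C α * C β * Zsub α β * psComp (g 0) (Zsub α β)
      + C α * C α * Zsub α β * psComp fQ (Zsub α β) := by
    have h := congrArg (fun t => psComp t (Zsub α β)) hfQ
    simp only [psComp_add hW, psComp_mul hW, psComp_C hW, psComp_X hW, psComp_one hW] at h
    simp only [map_mul, map_add, map_pow] at h
    linear_combination h
  have HG0 : psComp (g 0) (Zsub α β) =
      C α * C β * Zsub α β * psComp (f 0) (Zsub α β)
      + C α * C β * Zsub α β * psComp (g 1) (Zsub α β)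
      + C α * C β * Zsub α β * psComp fQ (Zsub α β)
      + (C α * C α + C β * C β) * Zsub α β * psComp (g 0) (Zsub α β) := by
    have h := congrArg (fun t => psComp t (Zsub α β)) hg0
    simp only [psComp_add hW, psComp_mul hW, psComp_C hW, psComp_X hW, psComp_one hW] at h
    simp only [map_mul, map_add, map_pow] at h
    linear_combination h
  -- shift identities
  have keyf : ∀ N, C α * C β *
      (psComp (f (N + 2)) (Zsub α β) - X * psComp (f (N + 1)) (Zsub α β)) =
      C α * C β *
      (X * (psComp (f (N + 3)) (Zsub α β) - X * psComp (f (N + 2)) (Zsub α β))) := by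
    intro N
    linear_combination ((C α + C β * X) * (C β + C α * X)) * (Hf N)
      + (C α * C β * psComp (f (N + 1)) (Zsub α β)
        + C α * C β * psComp (f (N + 3)) (Zsub α β)
        + (C α * C α + C β * C β) * psComp (f (N + 2)) (Zsub α β)) * hWQ
  have keyg : ∀ N, C α * C β *
      (psComp (g (N + 1)) (Zsub α β) - X * psComp (g N) (Zsub α β)) =
      C α * C β *
      (X * (psComp (g (N + 2)) (Zsub α β) - X * psComp (g (N + 1)) (Zsub α β))) := by
    intro N
    linear_combination ((C α + C β * X) * (C β + C α * X)) * (Hg N)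
      + (C α * C β * psComp (g N) (Zsub α β)
        + C α * C β * psComp (g (N + 2)) (Zsub α β)
        + (C α * C α + C β * C β) * psComp (g (N + 1)) (Zsub α β)) * hWQ
  have hshift : ∀ N, psComp (f (N + 2)) (Zsub α β) = X * psComp (f (N + 1)) (Zsub α β) := by
    have h0 := vanish_of_shift
      (fun j => psComp (f (j + 2)) (Zsub α β) - X * psComp (f (j + 1)) (Zsub α β))
      (fun N => by
        have h := mul_left_cancel₀ hCAB (keyf N)
        show psComp (f (N + 2)) (Zsub α β) - X * psComp (f (N + 1)) (Zsub α β)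
          = X * (psComp (f (N + 1 + 2)) (Zsub α β) - X * psComp (f (N + 1 + 1)) (Zsub α β))
        convert h using 4 <;> omega)
    intro N
    have h := h0 N
    beta_reduce at h
    linear_combination h
  have hgshift : psComp (g 1) (Zsub α β) = X * psComp (g 0) (Zsub α β) := by
    have h0 := vanish_of_shift
      (fun j => psComp (g (j + 1)) (Zsub α β) - X * psComp (g j) (Zsub α β))
      (fun N => by
        have h := mul_left_cancel₀ hCAB (keyg N)
        show psComp (g (N + 1)) (Zsub α β) - X * psComp (g N) (Zsub α β)
          = X * (psComp (g (N + 1 + 1)) (Zsub α β) - X * psComp (g (N + 1)) (Zsub α β))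
        convert h using 4 <;> omega)
    have h := h0 0
    beta_reduce at h
    linear_combination h
  have hsh0 : psComp (f 2) (Zsub α β) = X * psComp (f 1) (Zsub α β) := hshift 0
  -- boundary algebra
  have eG0 : psComp (g 0) (Zsub α β) =
      X * psComp (f 0) (Zsub α β) + X * psComp fQ (Zsub α β) := by
    refine mul_left_cancel₀ hCAB ?_
    linear_combination ((C α + C β * X) * (C β + C α * X)) * HG0
      + (C α * C β * psComp (f 0) (Zsub α β)
        + C α * C β * psComp (g 1) (Zsub α β)
        + C α * C β * psComp fQ (Zsub α β)
        + (C α * C α + C β * C β) * psComp (g 0) (Zsub α β)) * hWQ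
      + C α * C β * X * hgshift
  have eQ : (C α + C β * X) * psComp fQ (Zsub α β) =
      C α * X ^ 2 * psComp (f 0) (Zsub α β) := by
    refine mul_left_cancel₀ hCβ ?_
    linear_combination ((C α + C β * X) * (C β + C α * X)) * HQ
      + (C α * C β * psComp (g 0) (Zsub α β)
        + C α * C α * psComp fQ (Zsub α β)) * hWQ
      + C α * C β * X * eG0
  have e1 : C α * psComp (f 1) (Zsub α β) =
      C α * X * psComp (f 0) (Zsub α β) + C β * X * psComp fQ (Zsub α β) := by
    refine mul_left_cancel₀ hCβ ?_
    linear_combination ((C α + C β * X) * (C β + C α * X)) * H1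
      + (C α * C β * psComp (f 0) (Zsub α β)
        + C α * C β * psComp (f 2) (Zsub α β)
        + (C α * C α + C β * C β) * psComp (f 1) (Zsub α β)
        + C β * C β * psComp fQ (Zsub α β)) * hWQ
      + C α * C β * X * hsh0
  have e3 : (C α + C β * X) * psComp (f 1) (Zsub α β) =
      X * (C α + C β * X + C β * X ^ 2) * psComp (f 0) (Zsub α β) := by
    refine mul_left_cancel₀ hCα ?_
    linear_combination (C α + C β * X) * e1 + C β * X * eQ
  have e4 : C α * C β * (1 - X ^ 3) * psComp (f 0) (Zsub α β) =
      (C α + C β * X) * (C β + C α * X) := by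
    refine mul_left_cancel₀ hCabX ?_
    linear_combination (C α + C β * X) * ((C α + C β * X) * (C β + C α * X)) * H0
      + (C α + C β * X) * (C α * C β * psComp (f 1) (Zsub α β)
        + (C α * C α + C β * C β) * psComp (f 0) (Zsub α β)
        + C α * C β * psComp fQ (Zsub α β)) * hWQ
      + C α * C β * X * e3
      + C α * C β * X * eQ
  have final1 : C α * C β * (1 - X ^ 3) * psComp (f 1) (Zsub α β) =
      X * (X * C α + C β) * (C α + X * C β + C β * X ^ 2) := by
    refine mul_left_cancel₀ hCabX ?_
    linear_combination C α * C β * (1 - X ^ 3) * e3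
      + X * (C α + C β * X + C β * X ^ 2) * e4
  have hFpow : ∀ m : ℕ, psComp (f (m + 1)) (Zsub α β) = X ^ m * psComp (f 1) (Zsub α β) := by
    intro m
    induction m with
    | zero => simp
    | succ m ih =>
      have := hshift m
      rw [show m + 1 + 1 = m + 2 from rfl, this, ih, pow_succ]
      ring
  intro j hj
  obtain ⟨m, rfl⟩ : ∃ m, j = m + 1 := ⟨j - 1, by omega⟩
  rw [hFpow m, map_mul]
  linear_combination X ^ m * final1
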